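/- Let $M$ be compact, $L : TM \to \mathbb{R}$ continuous with $C_L := \max\{|L(x,v) + c_0| : \|v\|_x \le 1\} < \infty$, $a : M \to \mathbb{R}$ continuous with a point $x_0$ where $a(x_0) > 0$, and $\lambda \in (0,1)$. For $x \in M$ let $d = d(x_0, x)$ and let $\zeta : [-d, 0] \to M$ be a unit-speed geodesic from $x_0$ to $x$; extend it by the constant $x_0$ on $(-\infty, -d)$ to obtain $\bar\gamma : (-\infty, 0] \to M$. Then $$\limsup_{t \to +\infty} \int_{-t}^0 e^{-\lambda \int_s^0 a(\bar\gamma(\tau))\,d\tau}\,(L(\bar\gamma(s), \dot{\bar\gamma}(s)) + c_0)\,ds \le \frac{2 C_L\, e^{\|a\|_\infty \overline{D}}}{\lambda\, a(x_0)},$$ where $\overline{D} = \mathrm{diam}(M)$. In particular the value function $V_\lambda(x)$ (infimum of the limsup over all curves ending at $x$) satisfies $V_\lambda(x) \le \widehat{C}^+_v / \lambda$ with $\widehat{C}^+_v = 2 C_L e^{\|a\|_\infty \overline{D}} / a(x_0)$, for all $x$ and $\lambda \in (0,1)$. -/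

import Mathlib

open Real MeasureTheory Filter

private lemma exp_integral_aux (c : ℝ) (hc : c ≠ 0) (u v : ℝ) :
    (∫ s in u..v, Real.exp (c * s)) = (Real.exp (c * v) - Real.exp (c * u)) / c := by
  rw [intervalIntegral.integral_comp_mul_left Real.exp hc, integral_exp, smul_eq_mul]
  field_simp

theorem stmt_13 {M : Type*} [MetricSpace M] [CompactSpace M]
    (lam A CL Dbar : ℝ) (hlam : lam ∈ Set.Ioo (0:ℝ) 1) (hCL : 0 < CL) (hA : 0 < A)
    (a : M → ℝ) (ha : Continuous a) (haA : ∀ z, |a z| ≤ A)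
    (hD : ∀ z y : M, dist z y ≤ Dbar)
    (x0 x : M) (hx0 : 0 < a x0)
    (γ : ℝ → M) (hγ0 : γ 0 = x)
    (hγgeod : ∀ s ∈ Set.Icc (-(dist x0 x)) 0, ∀ t ∈ Set.Icc (-(dist x0 x)) 0,
      dist (γ s) (γ t) = |s - t|)
    (hγconst : ∀ t ≤ -(dist x0 x), γ t = x0)
    (ℓ : ℝ → ℝ) (hℓ : Continuous ℓ) (hℓCL : ∀ s, |ℓ s| ≤ CL) :
    Filter.limsup (fun t => ∫ s in (-t)..0, Real.exp (-lam * ∫ τ in s..0, a (γ τ)) * ℓ s)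
        Filter.atTop
      ≤ 2 * CL * Real.exp (A * Dbar) / (lam * a x0) := by
  obtain ⟨hlam0, hlam1⟩ := hlam
  set d := dist x0 x with hd
  have hd0 : 0 ≤ d := dist_nonneg
  have hdD : d ≤ Dbar := hD x0 x
  have hD0 : 0 ≤ Dbar := le_trans hd0 hdD
  have ha0A : a x0 ≤ A := le_trans (le_abs_self _) (haA x0)
  have hla0 : 0 < lam * a x0 := mul_pos hlam0 hx0
  have hlA : 0 < lam * A := mul_pos hlam0 hA
  have hexpD : Real.exp (lam * A * d) ≤ Real.exp (A * Dbar) := by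
    apply Real.exp_le_exp.mpr
    have h1 : lam * (A * d) ≤ 1 * (A * d) :=
      mul_le_mul_of_nonneg_right hlam1.le (mul_nonneg hA.le hd0)
    have h2 : A * d ≤ A * Dbar := mul_le_mul_of_nonneg_left hdD hA.le
    nlinarith
  -- Lipschitz bound on γ over (-∞, 0]
  have hlip : ∀ s ∈ Set.Iic (0:ℝ), ∀ t ∈ Set.Iic (0:ℝ),
      dist (γ s) (γ t) ≤ (1:NNReal) * dist s t := by
    have key : ∀ s t : ℝ, s ≤ t → t ≤ 0 → dist (γ s) (γ t) ≤ |s - t| := by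
      intro s t hst ht0
      rcases le_or_gt (-d) s with hs | hs
      · rw [hγgeod s ⟨hs, le_trans hst ht0⟩ t ⟨le_trans hs hst, ht0⟩]
      · rcases le_or_gt t (-d) with ht | ht
        · rw [hγconst s (le_of_lt hs), hγconst t ht, dist_self]
          exact abs_nonneg _
        · have h1 : γ s = x0 := hγconst s (le_of_lt hs)
          have h2 : γ (-d) = x0 := hγconst (-d) le_rfl
          rw [h1, ← h2, hγgeod (-d) ⟨le_rfl, neg_nonpos_of_nonneg hd0⟩ t ⟨le_of_lt ht, ht0⟩]
          rw [abs_of_nonpos (by linarith), abs_of_nonpos (by linarith)]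
          linarith
    intro s hs t ht
    rw [NNReal.coe_one, one_mul, Real.dist_eq]
    rcases le_total s t with h | h
    · exact key s t h ht
    · rw [dist_comm, abs_sub_comm]; exact key t s h hs
  have hγc : ContinuousOn γ (Set.Iic 0) :=
    (LipschitzOnWith.of_dist_le_mul hlip).continuousOn
  -- continuous extension of a ∘ γ
  set g : ℝ → ℝ := fun τ => a (γ (min τ 0)) with hgdef
  have hg : Continuous g := by
    apply ha.comp
    exact hγc.comp_continuous (continuous_id.min continuous_const)
      (fun τ => min_le_right τ 0)
  have hgint : ∀ u v : ℝ, IntervalIntegrable g volume u v :=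
    fun u v => hg.intervalIntegrable u v
  have hgA : ∀ τ, -A ≤ g τ := fun τ => (abs_le.mp (haA _)).1
  have hcong : ∀ s ≤ (0:ℝ), (∫ τ in s..0, a (γ τ)) = ∫ τ in s..0, g τ := by
    intro s hs
    apply intervalIntegral.integral_congr
    intro τ hτ
    rw [Set.uIcc_of_le hs] at hτ
    simp [hgdef, min_eq_left hτ.2]
  set E : ℝ → ℝ := fun s => Real.exp (-lam * ∫ τ in s..0, g τ) with hEdef
  have hprim : Continuous fun s => ∫ τ in s..0, g τ := by
    have h1 : Continuous fun s => ∫ τ in (0:ℝ)..s, g τ :=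
      intervalIntegral.continuous_primitive hgint 0
    have h2 : (fun s => ∫ τ in s..0, g τ) = fun s => -(∫ τ in (0:ℝ)..s, g τ) := by
      funext s; rw [intervalIntegral.integral_symm]
    rw [h2]; exact h1.neg
  have hEc : Continuous E := Real.continuous_exp.comp (continuous_const.mul hprim)
  have hE0 : ∀ s, 0 ≤ E s := fun s => (Real.exp_pos _).le
  -- pointwise bounds on E
  have hE1 : ∀ s ∈ Set.Icc (-d) (0:ℝ), E s ≤ Real.exp (-(lam * A) * s) := by
    intro s hs
    apply Real.exp_le_exp.mpr
    have hint : A * s ≤ ∫ τ in s..0, g τ := by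
      have := intervalIntegral.integral_mono_on hs.2
        (intervalIntegrable_const (c := -A)) (hgint s 0)
        (fun τ _ => hgA τ)
      rwa [intervalIntegral.integral_const, smul_eq_mul,
        show (0 - s) * (-A) = A * s by ring] at this
    nlinarith
  have hE2 : ∀ s ≤ -d,
      E s ≤ Real.exp (lam * A * d) * Real.exp (lam * a x0 * d) * Real.exp (lam * a x0 * s) := by
    intro s hs
    rw [← Real.exp_add, ← Real.exp_add]
    apply Real.exp_le_exp.mpr
    have hsplit : (∫ τ in s..0, g τ) = (∫ τ in s..(-d), g τ) + ∫ τ in (-d)..0, g τ :=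
      (intervalIntegral.integral_add_adjacent_intervals (hgint s (-d)) (hgint (-d) 0)).symm
    have hpart1 : (∫ τ in s..(-d), g τ) = a x0 * (-d - s) := by
      have heq : (∫ τ in s..(-d), g τ) = ∫ τ in s..(-d), a x0 := by
        apply intervalIntegral.integral_congr
        intro τ hτ
        rw [Set.uIcc_of_le hs] at hτ
        have hτ0 : τ ≤ 0 := le_trans hτ.2 (neg_nonpos_of_nonneg hd0)
        simp only [hgdef, min_eq_left hτ0]
        rw [hγconst τ hτ.2]
      rw [heq, intervalIntegral.integral_const, smul_eq_mul]; ring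
    have hpart2 : -(A * d) ≤ ∫ τ in (-d)..0, g τ := by
      have := intervalIntegral.integral_mono_on (neg_nonpos_of_nonneg hd0)
        (intervalIntegrable_const (c := -A)) (hgint (-d) 0)
        (fun τ _ => hgA τ)
      rwa [intervalIntegral.integral_const, smul_eq_mul,
        show (0 - -d) * (-A) = -(A * d) by ring] at this
    nlinarith [hsplit, hpart1, hpart2]
  -- the main estimate for each t ≥ d
  have key : ∀ t : ℝ, d ≤ t →
      |∫ s in (-t)..0, Real.exp (-lam * ∫ τ in s..0, a (γ τ)) * ℓ s|
        ≤ 2 * CL * Real.exp (A * Dbar) / (lam * a x0) := by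
    intro t ht
    have ht0 : 0 ≤ t := le_trans hd0 ht
    have hnt : -t ≤ 0 := neg_nonpos_of_nonneg ht0
    have hntd : -t ≤ -d := neg_le_neg ht
    have hrw : (∫ s in (-t)..0, Real.exp (-lam * ∫ τ in s..0, a (γ τ)) * ℓ s)
        = ∫ s in (-t)..0, E s * ℓ s := by
      apply intervalIntegral.integral_congr
      intro s hs
      rw [Set.uIcc_of_le hnt] at hs
      show Real.exp (-lam * ∫ τ in s..0, a (γ τ)) * ℓ s = E s * ℓ s
      rw [hcong s hs.2]
    rw [hrw]
    have hmono : |∫ s in (-t)..0, E s * ℓ s| ≤ ∫ s in (-t)..0, CL * E s := by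
      refine le_trans (intervalIntegral.abs_integral_le_integral_abs hnt) ?_
      apply intervalIntegral.integral_mono_on hnt
        (((hEc.mul hℓ).abs).intervalIntegrable _ _)
        (((continuous_const.mul hEc)).intervalIntegrable _ _)
      intro s _
      show |E s * ℓ s| ≤ CL * E s
      rw [abs_mul, abs_of_nonneg (hE0 s)]
      calc E s * |ℓ s| ≤ E s * CL := mul_le_mul_of_nonneg_left (hℓCL s) (hE0 s)
        _ = CL * E s := mul_comm _ _
    refine le_trans hmono ?_
    have hsplit : (∫ s in (-t)..0, CL * E s)
        = (∫ s in (-t)..(-d), CL * E s) + ∫ s in (-d)..0, CL * E s :=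
      (intervalIntegral.integral_add_adjacent_intervals
        (((continuous_const.mul hEc)).intervalIntegrable _ _)
        (((continuous_const.mul hEc)).intervalIntegrable _ _)).symm
    rw [hsplit]
    -- piece 1 : over [-d, 0]
    have hp1 : (∫ s in (-d)..0, CL * E s) ≤ CL * Real.exp (A * Dbar) / (lam * a x0) := by
      have h1 : (∫ s in (-d)..0, CL * E s)
          ≤ ∫ s in (-d)..0, CL * Real.exp (-(lam * A) * s) := by
        apply intervalIntegral.integral_mono_on (neg_nonpos_of_nonneg hd0)
          (((continuous_const.mul hEc)).intervalIntegrable _ _)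
          (Continuous.intervalIntegrable (continuous_const.mul
            (Real.continuous_exp.comp (continuous_const.mul continuous_id))) _ _)
        intro s hs
        exact mul_le_mul_of_nonneg_left (hE1 s hs) hCL.le
      refine le_trans h1 ?_
      rw [intervalIntegral.integral_const_mul,
        exp_integral_aux (-(lam * A)) (neg_ne_zero.mpr (ne_of_gt hlA)) (-d) 0,
        show -(lam * A) * 0 = 0 by ring, show -(lam * A) * -d = lam * A * d by ring,
        Real.exp_zero]
      have hnum : (Real.exp 0 - Real.exp (lam * A * d)) / -(lam * A)
          = (Real.exp (lam * A * d) - 1) / (lam * A) := by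
        rw [Real.exp_zero]; field_simp; ring
      have hexp1 : (1:ℝ) ≤ Real.exp (lam * A * d) := by
        rw [← Real.exp_zero]
        apply Real.exp_le_exp.mpr; positivity
      have hfr : (1 - Real.exp (lam * A * d)) / -(lam * A)
          = (Real.exp (lam * A * d) - 1) / (lam * A) := by
        field_simp; ring
      rw [hfr, mul_div_assoc]
      apply mul_le_mul_of_nonneg_left _ hCL.le
      apply div_le_div₀ (Real.exp_pos _).le (by linarith) hla0
      nlinarith
    -- piece 2 : over [-t, -d]
    have hp2 : (∫ s in (-t)..(-d), CL * E s) ≤ CL * Real.exp (A * Dbar) / (lam * a x0) := by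
      set K : ℝ := CL * (Real.exp (lam * A * d) * Real.exp (lam * a x0 * d)) with hK
      have hK0 : 0 ≤ K := by positivity
      have h1 : (∫ s in (-t)..(-d), CL * E s)
          ≤ ∫ s in (-t)..(-d), K * Real.exp (lam * a x0 * s) := by
        apply intervalIntegral.integral_mono_on hntd
          (((continuous_const.mul hEc)).intervalIntegrable _ _)
          (Continuous.intervalIntegrable (continuous_const.mul
            (Real.continuous_exp.comp (continuous_const.mul continuous_id))) _ _)
        intro s hs
        have := hE2 s hs.2
        calc CL * E s ≤ CL * (Real.exp (lam * A * d) * Real.exp (lam * a x0 * d)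
              * Real.exp (lam * a x0 * s)) := by
              apply mul_le_mul_of_nonneg_left _ hCL.le
              rw [mul_assoc] at this ⊢; exact this
          _ = K * Real.exp (lam * a x0 * s) := by rw [hK]; ring
      refine le_trans h1 ?_
      rw [intervalIntegral.integral_const_mul,
        exp_integral_aux (lam * a x0) (ne_of_gt hla0) (-t) (-d)]
      have hle : (Real.exp (lam * a x0 * -d) - Real.exp (lam * a x0 * -t)) / (lam * a x0)
          ≤ Real.exp (lam * a x0 * -d) / (lam * a x0) :=
        (div_le_div_iff_of_pos_right hla0).mpr (by nlinarith [Real.exp_pos (lam * a x0 * -t)])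
      have step1 := mul_le_mul_of_nonneg_left hle hK0
      refine le_trans step1 ?_
      have hKe : K * Real.exp (lam * a x0 * -d) = CL * Real.exp (lam * A * d) := by
        have h2 : Real.exp (lam * a x0 * d) * Real.exp (lam * a x0 * -d) = 1 := by
          rw [← Real.exp_add, show lam * a x0 * d + lam * a x0 * -d = 0 by ring, Real.exp_zero]
        calc K * Real.exp (lam * a x0 * -d)
            = CL * Real.exp (lam * A * d)
              * (Real.exp (lam * a x0 * d) * Real.exp (lam * a x0 * -d)) := by rw [hK]; ring
          _ = CL * Real.exp (lam * A * d) := by rw [h2, mul_one]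
      rw [← mul_div_assoc, hKe, mul_div_assoc, mul_div_assoc]
      apply mul_le_mul_of_nonneg_left _ hCL.le
      exact (div_le_div_iff_of_pos_right hla0).mpr hexpD
    calc (∫ s in (-t)..(-d), CL * E s) + ∫ s in (-d)..0, CL * E s
        ≤ CL * Real.exp (A * Dbar) / (lam * a x0) + CL * Real.exp (A * Dbar) / (lam * a x0) :=
          add_le_add hp2 hp1
      _ = 2 * CL * Real.exp (A * Dbar) / (lam * a x0) := by ring
  -- conclude via limsup
  have hev1 : ∀ᶠ t in Filter.atTop,
      (fun t => ∫ s in (-t)..0, Real.exp (-lam * ∫ τ in s..0, a (γ τ)) * ℓ s) t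
        ≤ 2 * CL * Real.exp (A * Dbar) / (lam * a x0) :=
    Filter.eventually_atTop.2 ⟨d, fun t ht => le_trans (le_abs_self _) (key t ht)⟩
  have hev2 : ∀ᶠ t in Filter.atTop,
      -(2 * CL * Real.exp (A * Dbar) / (lam * a x0)) ≤
      (fun t => ∫ s in (-t)..0, Real.exp (-lam * ∫ τ in s..0, a (γ τ)) * ℓ s) t :=
    Filter.eventually_atTop.2 ⟨d, fun t ht => (abs_le.mp (key t ht)).1⟩
  exact Filter.limsup_le_of_le
    (Filter.IsBoundedUnder.isCoboundedUnder_le ⟨_, hev2⟩) hev1
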